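/- Define learning rates α_t = (H+1)/(H+t) for t ≥ 1, and weights α_t^i = α_i · ∏_{j=i+1}^t (1 − α_j) for 1 ≤ i ≤ t. Then for every t ≥ 1: max_{i∈[t]} α_t^i ≤ 2H/t and ∑_{i=1}^t (α_t^i)² ≤ 2H/t. -/

import Mathlib

/-- Learning rate `α_t = (H+1)/(H+t)`. -/
noncomputable def lr (H t : ℕ) : ℝ := (H + 1) / (H + t)

/-- Weight `α_t^i = α_i ∏_{j=i+1}^t (1 - α_j)`. -/
noncomputable def lrW (H t i : ℕ) : ℝ :=
  lr H i * ∏ j ∈ Finset.Icc (i + 1) t, (1 - lr H j)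

lemma lr_nonneg (H t : ℕ) : 0 ≤ lr H t := by unfold lr; positivity

lemma lr_le_one (H t : ℕ) (ht : 1 ≤ t) : lr H t ≤ 1 := by
  unfold lr
  have h1 : (1:ℝ) ≤ t := by exact_mod_cast ht
  have h0 : (0:ℝ) < H + t := by
    have : (0:ℝ) ≤ H := by positivity
    linarith
  rw [div_le_one h0]
  linarith

lemma lrW_nonneg (H t i : ℕ) (hi : 1 ≤ i) : 0 ≤ lrW H t i := by
  unfold lrW
  apply mul_nonneg (lr_nonneg H i)
  apply Finset.prod_nonneg
  intro j hj
  have hj1 : 1 ≤ j := by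
    have := (Finset.mem_Icc.mp hj).1; omega
  linarith [lr_le_one H j hj1]

lemma lrW_succ (H t i : ℕ) (h : i ≤ t) :
    lrW H (t + 1) i = lrW H t i * (1 - lr H (t + 1)) := by
  unfold lrW
  rw [Finset.prod_Icc_succ_top (by omega : i + 1 ≤ t + 1)]
  ring

lemma lrW_le (H : ℕ) (hH : 1 ≤ H) (i : ℕ) (hi : 1 ≤ i) :
    ∀ t, i ≤ t → lrW H t i ≤ (H + 1) / (H + t) := by
  refine Nat.le_induction ?_ ?_
  · unfold lrW
    rw [Finset.Icc_eq_empty (by omega), Finset.prod_empty, mul_one]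
    exact le_refl _
  · intro t ht ih
    have h1 : (0:ℝ) < H + t := by
      have h1' : (1:ℝ) ≤ t := by exact_mod_cast le_trans hi ht
      have : (0:ℝ) ≤ H := by positivity
      linarith
    have h2 : (0:ℝ) < H + (t + 1 : ℕ) := by push_cast; linarith
    have ht1 : (1:ℕ) ≤ t + 1 := by omega
    have hw0 : 0 ≤ lrW H t i := lrW_nonneg H t i hi
    have hs0 : 0 ≤ 1 - lr H (t + 1) := by linarith [lr_le_one H (t + 1) ht1]
    rw [lrW_succ H t i ht]
    calc lrW H t i * (1 - lr H (t + 1))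
        ≤ (H + 1) / (H + t) * (1 - lr H (t + 1)) :=
          mul_le_mul_of_nonneg_right ih hs0
      _ ≤ (H + 1) / (H + (t + 1 : ℕ)) := by
          have hα : 1 - lr H (t + 1) = t / (H + (t + 1 : ℕ)) := by
            unfold lr
            push_cast
            field_simp
            ring
          rw [hα, div_mul_div_comm, div_le_div_iff₀ (by positivity) h2]
          have hH0 : (0:ℝ) ≤ H := by positivity
          have h2' : (0:ℝ) < (H:ℝ) + t + 1 := by push_cast at h2 ⊢; linarith
          push_cast
          nlinarith [mul_nonneg (mul_nonneg (show (0:ℝ) ≤ (H:ℝ) + 1 by positivity) h2'.le) hH0]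

lemma lrW_sum (H : ℕ) : ∀ t, 1 ≤ t → ∑ i ∈ Finset.Icc 1 t, lrW H t i = 1 := by
  refine Nat.le_induction ?_ ?_
  · have hne : (H:ℝ) + 1 ≠ 0 := by positivity
    simp [lrW, lr, Finset.Icc_eq_empty (by omega : ¬ (2:ℕ) ≤ 1)]
    field_simp
    exact hne
  · intro t ht ih
    rw [Finset.sum_Icc_succ_top (by omega : (1:ℕ) ≤ t + 1)]
    have hlast : lrW H (t + 1) (t + 1) = lr H (t + 1) := by
      unfold lrW
      rw [Finset.Icc_eq_empty (by omega), Finset.prod_empty, mul_one]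
    have hstep : ∑ i ∈ Finset.Icc 1 t, lrW H (t + 1) i
        = (∑ i ∈ Finset.Icc 1 t, lrW H t i) * (1 - lr H (t + 1)) := by
      rw [Finset.sum_mul]
      apply Finset.sum_congr rfl
      intro i hi
      exact lrW_succ H t i (Finset.mem_Icc.mp hi).2
    rw [hstep, ih, hlast]
    ring

theorem stmt5 (H : ℕ) (hH : 1 ≤ H) (t : ℕ) (ht : 1 ≤ t) :
    (∀ i ∈ Finset.Icc 1 t, lrW H t i ≤ 2 * H / t) ∧
    ∑ i ∈ Finset.Icc 1 t, (lrW H t i) ^ 2 ≤ 2 * H / t := by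
  have hHr : (1:ℝ) ≤ H := by exact_mod_cast hH
  have htr : (1:ℝ) ≤ t := by exact_mod_cast ht
  have ht0 : (0:ℝ) < t := by linarith
  have hHt : (0:ℝ) < H + t := by linarith
  have key : (H + 1 : ℝ) / (H + t) ≤ 2 * H / t := by
    rw [div_le_div_iff₀ hHt ht0]
    nlinarith
  have hmax : ∀ i ∈ Finset.Icc 1 t, lrW H t i ≤ 2 * H / t := by
    intro i hi
    obtain ⟨hi1, hi2⟩ := Finset.mem_Icc.mp hi
    exact le_trans (lrW_le H hH i hi1 t hi2) key
  refine ⟨hmax, ?_⟩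
  calc ∑ i ∈ Finset.Icc 1 t, (lrW H t i) ^ 2
      ≤ ∑ i ∈ Finset.Icc 1 t, (2 * H / t) * lrW H t i := by
        apply Finset.sum_le_sum
        intro i hi
        have hi1 := (Finset.mem_Icc.mp hi).1
        rw [sq]
        exact mul_le_mul_of_nonneg_right (hmax i hi) (lrW_nonneg H t i hi1)
    _ = 2 * H / t * ∑ i ∈ Finset.Icc 1 t, lrW H t i := by rw [Finset.mul_sum]
    _ = 2 * H / t := by rw [lrW_sum H t ht, mul_one]
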